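/- Let G be a locally compact Hausdorff group, H a closed subgroup of G, and X a locally compact Hausdorff space with a continuous G-action. Then the following are equivalent: (1) there exists a locally compact Hausdorff H-space Y and a G-equivariant homeomorphism X ≅ G×_H Y; (2) there exists a continuous G-equivariant map φ: X → G/H. Moreover, in case (2), setting Y := φ⁻¹({eH}) (a closed H-invariant subset of X), the map Φ: G×_H Y → X, Φ([g,y]) = g·y, is a G-equivariant homeomorphism. -/

import Mathlib

universe u

/-- The setoid on `G × Y` whose quotient is the induced space `G ×_H Y`:
`(g, y) ∼ (g * h⁻¹, h • y)` for `h ∈ H`. -/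
def indSetoid (G : Type u) [Group G] (H : Subgroup G) (Y : Type u)
    [MulAction (↥H) Y] : Setoid (G × Y) where
  r p q := ∃ h : ↥H, q.1 = p.1 * (h : G)⁻¹ ∧ q.2 = h • p.2
  iseqv := by
    constructor
    · intro p
      exact ⟨1, by simp, by simp⟩
    · rintro p q ⟨h, h1, h2⟩
      refine ⟨h⁻¹, by simp [h1], by simp [h2]⟩
    · rintro p q r ⟨h, h1, h2⟩ ⟨k, k1, k2⟩
      refine ⟨k * h, by simp [k1, h1, mul_assoc], by simp [k2, h2, mul_smul]⟩

/-- The induced `G`-space `G ×_H Y`:  the quotient of `G × Y` by the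
`H`-action `h • (g, y) = (g h⁻¹, h • y)`, endowed with the quotient
topology; `G` acts by left translation on the first coordinate. -/
abbrev IndSpace (G : Type u) [Group G] [TopologicalSpace G] (H : Subgroup G)
    (Y : Type u) [TopologicalSpace Y] [MulAction (↥H) Y] : Type u :=
  Quotient (indSetoid G H Y)

/-- Witness that the `G`-space `X` is (`G`-equivariantly homeomorphic to) a
space induced from a locally compact Hausdorff `H`-space `Y`. -/
structure InducedFrom (G : Type u) [Group G] [TopologicalSpace G]
    (H : Subgroup G) (X : Type u) [TopologicalSpace X] [MulAction G X] :
    Type (u + 1) where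
  /-- the `H`-space from which `X` is induced -/
  Y : Type u
  [tY : TopologicalSpace Y]
  [mY : MulAction (↥H) Y]
  locallyCompact : LocallyCompactSpace Y
  t2 : T2Space Y
  continuousSMul : ContinuousSMul (↥H) Y
  /-- the homeomorphism `G ×_H Y ≅ X` -/
  e : IndSpace G H Y ≃ₜ X
  equivariant : ∀ (g g' : G) (y : Y),
    e (Quotient.mk (indSetoid G H Y) (g' * g, y))
      = g' • e (Quotient.mk (indSetoid G H Y) (g, y))

/-- The (closed, `H`-invariant) global slice `Y = φ⁻¹({eH})` associated to a
`G`-map `φ : X → G/H`. -/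
abbrev SliceOf {G : Type u} [Group G] (H : Subgroup G) (X : Type u)
    [MulAction G X] (φ : X → G ⧸ H) : Type u :=
  {x : X // φ x = QuotientGroup.mk (1 : G)}

/-- The `H`-action on the slice `Y = φ⁻¹({eH})`, by restriction of the
`G`-action on `X`. -/
def sliceMulAction {G : Type u} [Group G] (H : Subgroup G) (X : Type u)
    [MulAction G X] (φ : X → G ⧸ H)
    (hφ : ∀ (g : G) (x : X), φ (g • x) = g • φ x) :
    MulAction (↥H) (SliceOf H X φ) where
  smul h x := ⟨(h : G) • (x : X), by
    rw [hφ, x.2]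
    have h1 : ((h : G) • (QuotientGroup.mk (1:G) : G ⧸ H))
        = QuotientGroup.mk ((h : G) * 1) := rfl
    rw [h1, mul_one]
    symm
    rw [QuotientGroup.eq]
    simpa using H.inv_mem h.2⟩
  one_smul x := Subtype.ext
    (show (((1 : ↥H) : G)) • (x : X) = (x : X) by simp)
  mul_smul h k x := Subtype.ext
    (show (((h * k : ↥H) : G)) • (x : X) = (h : G) • ((k : G) • (x : X)) by
      simp [mul_smul])


theorem indspace_slice_homeo {G : Type u} [Group G] [TopologicalSpace G] [IsTopologicalGroup G]
    (H : Subgroup G) (X : Type u) [TopologicalSpace X]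
    [MulAction G X] [ContinuousSMul G X]
    (φ : X → G ⧸ H) (hφc : Continuous φ)
    (hφ : ∀ (g : G) (x : X), φ (g • x) = g • φ x) :
    ∃ e : (@IndSpace G _ _ H (SliceOf H X φ) _ (sliceMulAction H X φ hφ)) ≃ₜ X,
      ∀ p : G × SliceOf H X φ,
        e (Quotient.mk (@indSetoid G _ H (SliceOf H X φ) (sliceMulAction H X φ hφ)) p)
          = p.1 • (p.2 : X) := by
  letI := sliceMulAction H X φ hφ
  set s := @indSetoid G _ H (SliceOf H X φ) (sliceMulAction H X φ hφ) with hs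
  have hmem : ∀ (g : G) (x : X), φ x = QuotientGroup.mk g →
      φ (g⁻¹ • x) = QuotientGroup.mk (1 : G) := by
    intro g x hgx
    rw [hφ, hgx]
    show QuotientGroup.mk (g⁻¹ * g) = _
    rw [inv_mul_cancel]
  have houtφ : ∀ x : X, φ x = QuotientGroup.mk (φ x).out :=
    fun x => (QuotientGroup.out_eq' (φ x)).symm
  -- the forward map
  have hΦ0 : ∀ p q : G × SliceOf H X φ, s.r p q →
      p.1 • (p.2 : X) = q.1 • (q.2 : X) := by
    rintro ⟨g, y⟩ ⟨g', y'⟩ ⟨h, h1, h2⟩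
    subst h1
    have h2' : (y' : X) = (h : G) • (y : X) := congrArg Subtype.val h2
    rw [h2', smul_smul]
    simp [mul_assoc]
  set Φ : Quotient s → X := Quotient.lift (fun p => p.1 • (p.2 : X)) hΦ0 with hΦ
  -- the backward map
  set Ψ : X → Quotient s := fun x =>
    Quotient.mk s ((φ x).out, ⟨(φ x).out⁻¹ • x, hmem _ _ (houtφ x)⟩) with hΨ
  -- key independence lemma
  have hkey : ∀ (g g' : G) (x : X)
      (p1 : φ (g⁻¹ • x) = QuotientGroup.mk (1 : G))
      (p2 : φ (g'⁻¹ • x) = QuotientGroup.mk (1 : G)),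
      φ x = QuotientGroup.mk g → φ x = QuotientGroup.mk g' →
      Quotient.mk s (g, ⟨g⁻¹ • x, p1⟩) = Quotient.mk s (g', ⟨g'⁻¹ • x, p2⟩) := by
    intro g g' x p1 p2 hg hg'
    apply Quotient.sound
    have hmemH : g⁻¹ * g' ∈ H := QuotientGroup.eq.mp (hg.symm.trans hg')
    have hmemH' : g'⁻¹ * g ∈ H := by
      have := H.inv_mem hmemH
      simpa [mul_inv_rev] using this
    refine ⟨⟨g'⁻¹ * g, hmemH'⟩, ?_, ?_⟩
    · show g' = g * (g'⁻¹ * g)⁻¹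
      group
    · apply Subtype.ext
      show g'⁻¹ • x = (g'⁻¹ * g) • (g⁻¹ • x)
      rw [smul_smul]
      simp [mul_assoc]
  -- inverses
  have hleft : ∀ a : Quotient s, Ψ (Φ a) = a := by
    intro a
    induction a using Quotient.ind with
    | _ p =>
      obtain ⟨g, y⟩ := p
      have hΦval : Φ (Quotient.mk s (g, y)) = g • (y : X) := rfl
      rw [hΦval, hΨ]
      have hφgy : φ (g • (y : X)) = QuotientGroup.mk g := by
        rw [hφ, y.2]
        show QuotientGroup.mk (g * 1) = _
        rw [mul_one]
      refine (hkey (φ (g • (y : X))).out g (g • (y : X))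
        (hmem _ _ (houtφ _)) (hmem _ _ hφgy) (houtφ _) hφgy).trans ?_
      exact congrArg (Quotient.mk s)
        (Prod.ext rfl (Subtype.ext (inv_smul_smul g (y : X))))
  have hright : ∀ x : X, Φ (Ψ x) = x := by
    intro x
    show (φ x).out • ((φ x).out⁻¹ • x) = x
    exact smul_inv_smul _ _
  -- continuity of Φ
  have hΦc : Continuous Φ := by
    apply Continuous.quotient_lift
    exact continuous_fst.smul (continuous_subtype_val.comp continuous_snd)
  -- continuity of Ψ via the pullback E of G → G/H along φ
  set E : Type u := {q : G × X // QuotientGroup.mk q.1 = φ q.2} with hE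
  set π : E → X := fun q => q.1.2 with hπ
  have hπc : Continuous π := continuous_snd.comp continuous_subtype_val
  have hπsurj : Function.Surjective π := fun x =>
    ⟨⟨((φ x).out, x), QuotientGroup.out_eq' _⟩, rfl⟩
  have hπopen : IsOpenMap π := by
    intro W hW
    obtain ⟨O, hO, hOW⟩ := isOpen_induced_iff.mp hW
    rw [isOpen_iff_forall_mem_open]
    rintro x ⟨q, hqW, rfl⟩
    have hqO : q.1 ∈ O := by
      rw [← hOW] at hqW
      exact hqW
    obtain ⟨U, V, hU, hV, hgU, hxV, hUV⟩ := isOpen_prod_iff.mp hO q.1.1 q.1.2 hqO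
    refine ⟨V ∩ φ ⁻¹' (QuotientGroup.mk '' U), ?_, ?_, ?_⟩
    · rintro z ⟨hzV, g, hgU', hg⟩
      refine ⟨⟨(g, z), hg⟩, ?_, rfl⟩
      rw [← hOW]
      exact hUV ⟨hgU', hzV⟩
    · exact hV.inter (hφc.isOpen_preimage _ (QuotientGroup.isOpenMap_coe _ hU))
    · exact ⟨hxV, q.1.1, hgU, q.2⟩
  have hquot : Topology.IsQuotientMap π := hπopen.isQuotientMap hπc hπsurj
  have hμmem : ∀ q : E, φ (q.1.1⁻¹ • q.1.2) = QuotientGroup.mk (1 : G) :=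
    fun q => hmem _ _ q.2.symm
  set μ : E → Quotient s := fun q =>
    Quotient.mk s (q.1.1, ⟨q.1.1⁻¹ • q.1.2, hμmem q⟩) with hμ
  have hμc : Continuous μ := by
    apply Continuous.comp continuous_coinduced_rng
    apply Continuous.prodMk (continuous_fst.comp continuous_subtype_val)
    apply Continuous.subtype_mk
    exact ((continuous_fst.comp continuous_subtype_val).inv).smul
      (continuous_snd.comp continuous_subtype_val)
  have hcomm : Ψ ∘ π = μ := by
    funext q
    exact (hkey q.1.1 (φ q.1.2).out q.1.2 (hμmem q) (hmem _ _ (houtφ _))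
      q.2.symm (houtφ _)).symm
  have hΨc : Continuous Ψ := by
    rw [hquot.continuous_iff, hcomm]
    exact hμc
  exact ⟨⟨⟨Φ, Ψ, hleft, hright⟩, hΦc, hΨc⟩, fun p => rfl⟩

/-- Let `G` be a locally compact Hausdorff group, `H` a closed subgroup of
`G`, and `X` a locally compact Hausdorff `G`-space.  Then the following are
equivalent: (1) there exists a locally compact Hausdorff `H`-space `Y` and a
`G`-equivariant homeomorphism `X ≅ G ×_H Y`; (2) there exists a continuous
`G`-equivariant map `φ : X → G/H`.  Moreover, in case (2), setting
`Y := φ⁻¹({eH})`, the map `Φ : G ×_H Y → X`, `Φ([g,y]) = g • y`, is a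
(`G`-equivariant) homeomorphism. -/
theorem induced_space_iff_map_to_coset_space
    (G : Type u) [Group G] [TopologicalSpace G] [IsTopologicalGroup G]
    [LocallyCompactSpace G] [T2Space G]
    (H : Subgroup G) (hH : IsClosed (H : Set G))
    (X : Type u) [TopologicalSpace X] [LocallyCompactSpace X] [T2Space X]
    [MulAction G X] [ContinuousSMul G X] :
    (Nonempty (InducedFrom G H X) ↔
      ∃ φ : X → G ⧸ H, Continuous φ ∧ ∀ (g : G) (x : X), φ (g • x) = g • φ x) ∧
    (∀ (φ : X → G ⧸ H), Continuous φ →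
      ∀ hφ : (∀ (g : G) (x : X), φ (g • x) = g • φ x),
      ∃ e : (@IndSpace G _ _ H (SliceOf H X φ) _ (sliceMulAction H X φ hφ)) ≃ₜ X,
        ∀ p : G × SliceOf H X φ,
          e (Quotient.mk (@indSetoid G _ H (SliceOf H X φ) (sliceMulAction H X φ hφ)) p)
            = p.1 • (p.2 : X)) := by
  constructor
  · constructor
    · rintro ⟨F⟩
      letI := F.tY
      letI := F.mY
      have hresp : ∀ p q : G × F.Y, (indSetoid G H F.Y).r p q →
          (QuotientGroup.mk p.1 : G ⧸ H) = QuotientGroup.mk q.1 := by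
        rintro ⟨g, y⟩ ⟨g', y'⟩ ⟨h, h1, h2⟩
        rw [h1]
        exact QuotientGroup.eq.mpr (by simpa [mul_assoc] using H.inv_mem h.2)
      refine ⟨(Quotient.lift (fun p : G × F.Y => (QuotientGroup.mk p.1 : G ⧸ H)) hresp)
        ∘ F.e.symm, ?_, ?_⟩
      · exact (Continuous.quotient_lift
          (continuous_quotient_mk'.comp continuous_fst) _).comp F.e.symm.continuous
      · intro g' x
        obtain ⟨⟨g, y⟩, hp⟩ := Quotient.exists_rep (F.e.symm x)
        have hx : F.e (Quotient.mk (indSetoid G H F.Y) (g, y)) = x := by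
          rw [hp]
          exact F.e.apply_symm_apply x
        have h1 : g' • x = F.e (Quotient.mk (indSetoid G H F.Y) (g' * g, y)) := by
          rw [F.equivariant, hx]
        show Quotient.lift _ hresp (F.e.symm (g' • x))
          = g' • Quotient.lift _ hresp (F.e.symm x)
        rw [h1, F.e.symm_apply_apply, ← hp]
        rfl
    · rintro ⟨φ, hφc, hφ⟩
      obtain ⟨e, he⟩ := indspace_slice_homeo H X φ hφc hφ
      letI := sliceMulAction H X φ hφ
      have hclosed : IsClosed {x : X | φ x = QuotientGroup.mk (1 : G)} := by
        have hq : Topology.IsQuotientMap (QuotientGroup.mk : G → G ⧸ H) :=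
          (QuotientGroup.isOpenMap_coe :
            IsOpenMap (QuotientGroup.mk : G → G ⧸ H)).isQuotientMap continuous_quotient_mk'
            QuotientGroup.mk_surjective
        have h1 : IsClosed ({QuotientGroup.mk (1 : G)} : Set (G ⧸ H)) := by
          rw [← hq.isClosed_preimage]
          have h2 : (QuotientGroup.mk : G → G ⧸ H) ⁻¹' {QuotientGroup.mk (1 : G)}
              = (H : Set G) := by
            ext g
            simp only [Set.mem_preimage, Set.mem_singleton_iff, SetLike.mem_coe]
            rw [QuotientGroup.eq]
            constructor
            · intro hg
              simpa using H.inv_mem hg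
            · intro hg
              simpa using H.inv_mem hg
          rw [h2]
          exact hH
        exact h1.preimage hφc
      refine ⟨⟨SliceOf H X φ, ?_, ?_, ?_, e, ?_⟩⟩
      · exact hclosed.isClosedEmbedding_subtypeVal.locallyCompactSpace
      · infer_instance
      · constructor
        apply continuous_induced_rng.mpr
        exact (continuous_subtype_val.comp continuous_fst).smul
          (continuous_subtype_val.comp continuous_snd)
      · intro g g' y
        rw [he, he]
        exact mul_smul g' g (y : X)
  · intro φ hφc hφ
    exact indspace_slice_homeo H X φ hφc hφ
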